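/- For every set F ⊆ ℝ^d, the packing dimension equals the modified generalized upper box dimension: dim_P F = \overline{dim}_MGB F := inf{ sup_{i≥1} \overline{dim}_GB F_i : F ⊆ ⋃_{i=1}^{∞} F_i }, where the infimum is over countable covers of F by subsets of ℝ^d. -/

import Mathlib

open Filter Metric Set Topology Bornology ENNReal

noncomputable section

variable {X : Type*} [PseudoMetricSpace X]

/-- `coveringNumber r E` is the smallest number of closed balls of radius `r`
needed to cover `E` (with value `⊤` if no finite cover exists). -/
def coveringNumber (r : ℝ) (E : Set X) : ℕ∞ :=
  sInf {n : ℕ∞ | ∃ t : Finset X, (E ⊆ ⋃ x ∈ t, closedBall x r) ∧ (t.card : ℕ∞) = n}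

/-- The Assouad spectrum `dim_A^θ F`. -/
def assouadSpectrum (θ : ℝ) (F : Set X) : ℝ :=
  sInf {s : ℝ | 0 ≤ s ∧ ∃ C > (0 : ℝ), ∀ R : ℝ, 0 < R → R < 1 → ∀ x ∈ F,
    (coveringNumber (R ^ (1 / θ)) (closedBall x R ∩ F) : ℝ≥0∞)
      ≤ ENNReal.ofReal (C * (R / R ^ (1 / θ)) ^ s)}

/-- The upper spectrum `\overline{dim}_A^θ F`. -/
def upperSpectrum (θ : ℝ) (F : Set X) : ℝ :=
  sInf {s : ℝ | 0 ≤ s ∧ ∃ C > (0 : ℝ), ∀ r R : ℝ, 0 < r → r ≤ R ^ (1 / θ) →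
    R ^ (1 / θ) < R → R < 1 → 0 < R → ∀ x ∈ F,
    (coveringNumber r (closedBall x R ∩ F) : ℝ≥0∞) ≤ ENNReal.ofReal (C * (R / r) ^ s)}

/-- The generalized upper box dimension `\overline{dim}_{GB} F := limsup_{θ → 0⁺} dim_A^θ F`. -/
def genUpperBoxDim (F : Set X) : ℝ :=
  limsup (fun θ : ℝ => assouadSpectrum θ F) (𝓝[>] (0 : ℝ))

/-- The quasi-Assouad dimension `dim_{qA} F := lim_{θ → 1⁻} \overline{dim}_A^θ F`
(the limit exists by monotonicity, hence equals the limsup). -/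
def quasiAssouadDim (F : Set X) : ℝ :=
  limsup (fun θ : ℝ => upperSpectrum θ F) (𝓝[<] (1 : ℝ))

/-- The upper box dimension `\overline{dim}_B F := limsup_{δ → 0⁺} log N_δ(F) / (- log δ)`. -/
def upperBoxDim (F : Set X) : ℝ :=
  limsup (fun δ : ℝ => Real.log ((coveringNumber δ F).toNat : ℝ) / (- Real.log δ))
    (𝓝[>] (0 : ℝ))

/-- The Assouad dimension `dim_A F`. -/
def assouadDim (F : Set X) : ℝ :=
  sInf {s : ℝ | 0 ≤ s ∧ ∃ C > (0 : ℝ), ∃ ρ > (0 : ℝ), ∀ r R : ℝ, 0 < r → r < R → R < ρ →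
    ∀ x ∈ F, (coveringNumber r (closedBall x R ∩ F) : ℝ≥0∞) ≤ ENNReal.ofReal (C * (R / r) ^ s)}

/-- The packing pre-measure at scale `δ`: the supremum of `∑ |B_i|^s` over at most countable
collections of disjoint closed balls of radii at most `δ` (and positive) with centres in `F`,
where `|B_i| = 2 r_i` is the diameter. -/
def packingPre (s δ : ℝ) (F : Set X) : ℝ≥0∞ :=
  ⨆ (D : Set (X × ℝ)) (_ : D.Countable)
    (_ : ∀ p ∈ D, p.1 ∈ F ∧ 0 < p.2 ∧ p.2 ≤ δ)
    (_ : D.Pairwise fun p q => Disjoint (closedBall p.1 p.2) (closedBall q.1 q.2)),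
    ∑' p : D, ENNReal.ofReal ((2 * (p : X × ℝ).2) ^ s)

/-- `𝒫₀^s(F) := lim_{δ → 0} 𝒫_δ^s(F)`; the limit exists by monotonicity and equals the inf. -/
def packingPre₀ (s : ℝ) (F : Set X) : ℝ≥0∞ :=
  ⨅ (δ : ℝ) (_ : 0 < δ), packingPre s δ F

/-- The packing (outer) measure `𝒫^s(F)`. -/
def packingMeasure (s : ℝ) (F : Set X) : ℝ≥0∞ :=
  ⨅ (G : ℕ → Set X) (_ : F ⊆ ⋃ i, G i), ∑' i, packingPre₀ s (G i)

/-- The packing dimension `dim_P F = inf {s ≥ 0 : 𝒫^s(F) = 0}`. -/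
def packingDim (F : Set X) : ℝ :=
  sInf {s : ℝ | 0 ≤ s ∧ packingMeasure s F = 0}


section Aux
variable {X : Type*} [PseudoMetricSpace X]

lemma coveringNumber_le_card {r : ℝ} {E : Set X} {t : Finset X}
    (h : E ⊆ ⋃ x ∈ t, closedBall x r) : coveringNumber r E ≤ t.card :=
  sInf_le ⟨t, h, rfl⟩

lemma coveringNumber_mono {r : ℝ} {E E' : Set X} (h : E ⊆ E') :
    coveringNumber r E ≤ coveringNumber r E' :=
  sInf_le_sInf (fun _n ⟨t, ht, htn⟩ => ⟨t, h.trans ht, htn⟩)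

lemma coveringNumber_anti {r r' : ℝ} (hr : r ≤ r') (E : Set X) :
    coveringNumber r' E ≤ coveringNumber r E := by
  refine sInf_le_sInf (fun n ⟨t, ht, htn⟩ => ⟨t, ?_, htn⟩)
  refine ht.trans (Set.iUnion₂_mono fun x _ => closedBall_subset_closedBall hr)

/-- Extract a cover from a bound on the covering number. -/
lemma exists_cover_of_coveringNumber_le {r : ℝ} {E : Set X} {n : ℕ}
    (h : coveringNumber r E ≤ n) :
    ∃ t : Finset X, (E ⊆ ⋃ x ∈ t, closedBall x r) ∧ t.card ≤ n := by
  by_contra hc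
  push_neg at hc
  have h1 : (n : ℕ∞) + 1 ≤ coveringNumber r E := by
    refine le_sInf (fun m hm => ?_)
    obtain ⟨t, ht, htm⟩ := hm
    have h2 : n + 1 ≤ t.card := hc t ht
    rw [← htm]
    exact_mod_cast h2
  have h3 : (n : ℕ∞) + 1 ≤ (n : ℕ∞) := h1.trans h
  have : ((n+1 : ℕ) : ℕ∞) ≤ ((n : ℕ) : ℕ∞) := by exact_mod_cast h3
  rw [Nat.cast_le] at this
  omega

lemma coveringNumber_empty (r : ℝ) : coveringNumber r (∅ : Set X) = 0 := by
  have := coveringNumber_le_card (r := r) (E := (∅ : Set X)) (t := ∅) (by simp)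
  simpa using this

/-- Subadditivity over a finite union. -/
lemma coveringNumber_biUnion_le (r : ℝ) {ι : Type*} (t : Finset ι) (S : ι → Set X) :
    coveringNumber r (⋃ y ∈ t, S y) ≤ ∑ y ∈ t, coveringNumber r (S y) := by
  classical
  induction t using Finset.induction_on with
  | empty => simp [_root_.coveringNumber_empty]
  | insert _ _ hx ih =>
    rename_i a u
    rw [Finset.sum_insert hx]
    have hsub : (⋃ y ∈ insert a u, S y) = S a ∪ ⋃ y ∈ u, S y := by
      simp [Set.biUnion_insert]
    rw [hsub]
    -- reduce to binary subadditivity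
    rcases le_or_gt (coveringNumber r (S a)) ⊤ with _ | h
    · by_cases ha : coveringNumber r (S a) = ⊤
      · rw [ha]; simp [top_add]
      by_cases hb : coveringNumber r (⋃ y ∈ u, S y) = ⊤
      · calc coveringNumber r (S a ∪ ⋃ y ∈ u, S y) ≤ ⊤ := le_top
          _ ≤ _ := by
            have : (∑ y ∈ u, coveringNumber r (S y)) = ⊤ := eq_top_mono (hb.symm ▸ ih) rfl
            simp [this]
      · obtain ⟨na, hna⟩ := (WithTop.ne_top_iff_exists).mp ha
        obtain ⟨nb, hnb⟩ := (WithTop.ne_top_iff_exists).mp hb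
        obtain ⟨ta, hta, hcard_a⟩ := exists_cover_of_coveringNumber_le (r := r) (E := S a)
          (n := na) (le_of_eq hna.symm)
        obtain ⟨tb, htb, hcard_b⟩ := exists_cover_of_coveringNumber_le (r := r)
          (E := ⋃ y ∈ u, S y) (n := nb) (le_of_eq hnb.symm)
        have hcover : (S a ∪ ⋃ y ∈ u, S y) ⊆ ⋃ x ∈ ta ∪ tb, closedBall x r := by
          intro z hz
          rcases hz with hz | hz
          · obtain ⟨_, ⟨w, rfl⟩, hw⟩ := hta hz
            simp only [Set.mem_iUnion] at hw ⊢
            obtain ⟨hw1, hw2⟩ := hw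
            exact ⟨w, Finset.mem_union_left _ hw1, hw2⟩
          · obtain ⟨_, ⟨w, rfl⟩, hw⟩ := htb hz
            simp only [Set.mem_iUnion] at hw ⊢
            obtain ⟨hw1, hw2⟩ := hw
            exact ⟨w, Finset.mem_union_right _ hw1, hw2⟩
        calc coveringNumber r (S a ∪ ⋃ y ∈ u, S y) ≤ ((ta ∪ tb).card : ℕ∞) :=
              coveringNumber_le_card hcover
          _ ≤ ((ta.card + tb.card : ℕ) : ℕ∞) := by exact_mod_cast Finset.card_union_le ta tb
          _ = (ta.card : ℕ∞) + tb.card := by exact_mod_cast Nat.cast_add _ _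
          _ ≤ coveringNumber r (S a) + ∑ y ∈ u, coveringNumber r (S y) := by
              refine add_le_add ?_ (le_trans ?_ ih)
              · rw [← hna]; exact Nat.cast_le.mpr hcard_a
              · rw [← hnb]; exact Nat.cast_le.mpr hcard_b
    · exact absurd h (by simp)

end Aux
section Aux1
variable {X : Type*} [PseudoMetricSpace X]

/-- If every `r`-separated finite subset of `E` has cardinality at most `N`, then there is
an `r`-net of `E` with centres in `E` and cardinality at most `N`. -/
lemma exists_net_of_separated_card_le {r : ℝ} {E : Set X} {N : ℕ} (hr : 0 ≤ r)
    (h : ∀ u : Finset X, ↑u ⊆ E → (∀ a ∈ u, ∀ b ∈ u, a ≠ b → r < dist a b) → u.card ≤ N) :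
    ∃ t : Finset X, ↑t ⊆ E ∧ (E ⊆ ⋃ x ∈ t, closedBall x r) ∧ t.card ≤ N := by
  classical
  set P : Finset X → Prop := fun u => ↑u ⊆ E ∧ (∀ a ∈ u, ∀ b ∈ u, a ≠ b → r < dist a b)
  set cards : Set ℕ := {n | ∃ u : Finset X, P u ∧ u.card = n}
  have h0 : (0 : ℕ) ∈ cards := ⟨∅, ⟨by simp, by simp⟩, rfl⟩
  have hbdd : BddAbove cards := by
    refine ⟨N, fun n hn => ?_⟩
    obtain ⟨u, hu, rfl⟩ := hn
    exact h u hu.1 hu.2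
  have hmem := Nat.sSup_mem ⟨0, h0⟩ hbdd
  obtain ⟨t, ht, htcard⟩ := hmem
  refine ⟨t, ht.1, ?_, htcard ▸ h t ht.1 ht.2⟩
  intro x hx
  by_contra hxt
  simp only [Set.mem_iUnion, mem_closedBall, exists_prop, not_exists, not_and, not_le] at hxt
  have hxnot : x ∉ t := fun hxmem => by
    have h1 := hxt x hxmem
    rw [dist_self] at h1
    exact absurd (hr.trans_lt h1) (lt_irrefl 0)
  have hP : P (insert x t) := by
    constructor
    · intro y hy
      rcases Finset.mem_insert.mp (by exact_mod_cast hy) with rfl | hy'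
      · exact hx
      · exact ht.1 hy'
    · intro a ha b hb hab
      rcases Finset.mem_insert.mp ha with rfl | ha' <;>
        rcases Finset.mem_insert.mp hb with rfl | hb'
      · exact absurd rfl hab
      · exact hxt b hb'
      · rw [dist_comm]; exact hxt a ha'
      · exact ht.2 a ha' b hb' hab
  have : (insert x t).card ∈ cards := ⟨insert x t, hP, rfl⟩
  have hle := le_csSup hbdd this
  rw [Finset.card_insert_of_notMem hxnot, htcard] at hle
  omega

/-- Points in `E` that are pairwise more than `2ρ` apart: at most one per closed `ρ`-ball,
so at most as many as balls in any `ρ`-cover of `E`. -/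
lemma separated_card_le_of_cover {ρ : ℝ} {E : Set X} {t : Finset X}
    (hcov : E ⊆ ⋃ x ∈ t, closedBall x ρ) (u : Finset X) (hu : ↑u ⊆ E)
    (hsep : ∀ a ∈ u, ∀ b ∈ u, a ≠ b → 2 * ρ < dist a b) : u.card ≤ t.card := by
  classical
  have hchoice : ∀ a ∈ u, ∃ y ∈ t, a ∈ closedBall y ρ := by
    intro a ha
    have := hcov (hu ha)
    simpa using this
  choose f hf hf2 using hchoice
  refine Finset.card_le_card_of_injOn (fun a => if ha : a ∈ u then f a ha else a) ?_ ?_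
  · intro a ha; have ha' : a ∈ u := by simpa using ha
    simp only [Finset.mem_coe, ha', dif_pos]; exact hf a ha'
  · intro a ha b hb hab
    simp only [Finset.mem_coe] at ha hb
    simp only [ha, hb, dif_pos] at hab
    by_contra hne
    have h1 := hf2 a ha
    have h2 := hf2 b hb
    rw [hab] at h1
    have : dist a b ≤ 2 * ρ := by
      calc dist a b ≤ dist a (f b hb) + dist (f b hb) b := dist_triangle _ _ _
        _ ≤ ρ + ρ := add_le_add (mem_closedBall.mp h1) (by rw [dist_comm]; exact h2)
        _ = 2 * ρ := by ring
    exact absurd (hsep a ha b hb hne) (not_lt.mpr this)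

/-- Helper: from an `ℝ≥0∞` bound on the covering number to an `ℕ` bound. -/
lemma coveringNumber_le_floor {r : ℝ} {E : Set X} {c : ℝ}
    (h : (coveringNumber r E : ℝ≥0∞) ≤ ENNReal.ofReal c) :
    coveringNumber r E ≤ (⌊c⌋₊ : ℕ∞) := by
  rcases eq_or_ne (coveringNumber r E) ⊤ with htop | htop
  · rw [htop] at h
    simp only [ENat.toENNReal_top] at h
    exact absurd (eq_top_mono h rfl) ofReal_ne_top
  · obtain ⟨n, hn⟩ := WithTop.ne_top_iff_exists.mp htop
    rw [← hn] at h ⊢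
    have h1 : ((n : ℝ≥0∞)) ≤ ENNReal.ofReal c := by exact_mod_cast h
    rcases le_or_gt 0 c with hc | hc
    · have h2 : (n : ℝ) ≤ c := by
        have h3 := ENNReal.toReal_mono ofReal_ne_top h1
        rw [ENNReal.toReal_ofReal hc] at h3
        simpa using h3
      exact Nat.cast_le.mpr (Nat.le_floor h2)
    · rw [ENNReal.ofReal_eq_zero.mpr hc.le] at h1
      have : (n : ℝ≥0∞) = 0 := le_antisymm h1 (zero_le)
      have hn0 : n = 0 := by exact_mod_cast this
      simp only [hn0, Nat.cast_zero]; exact zero_le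

end Aux1
section Aux2
open MeasureTheory

variable {d : ℕ}

local notation "Xd" => EuclideanSpace ℝ (Fin d)

/-- Volume counting: an `r`-separated finite subset of a ball of radius `R` in `ℝ^d` has
at most `((R+r)/(r/2))^d` elements. -/
lemma euclid_sep_card_le {x : Xd} {R r : ℝ} (hr : 0 < r) (hR : 0 ≤ R)
    (u : Finset Xd) (hu : ↑u ⊆ closedBall x R)
    (hsep : ∀ a ∈ u, ∀ b ∈ u, a ≠ b → r < dist a b) :
    (u.card : ℝ) ≤ ((R + r) / (r / 2)) ^ d := by
  classical
  by_cases hd : d = 0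
  · subst hd
    have hcard : u.card ≤ 1 := by
      refine Finset.card_le_one.mpr (fun a ha b hb => ?_)
      exact Subsingleton.elim a b
    calc (u.card : ℝ) ≤ 1 := by exact_mod_cast hcard
      _ = _ := by norm_num
  · haveI : Nonempty (Fin d) := ⟨⟨0, Nat.pos_of_ne_zero hd⟩⟩
    haveI : Nontrivial Xd := inferInstance
    set μ : Measure Xd := volume
    have hdisj : (↑u : Set Xd).PairwiseDisjoint (fun y => ball y (r / 2)) := by
      intro a ha b hb hab
      exact ball_disjoint_ball (by
        have := hsep a ha b hb hab
        linarith)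
    have hmeas : ∀ b ∈ u, MeasurableSet (ball b (r / 2)) := fun b _ => measurableSet_ball
    have hsum : μ (⋃ y ∈ u, ball y (r / 2)) = ∑ y ∈ u, μ (ball y (r / 2)) :=
      measure_biUnion_finset hdisj hmeas
    have hball : ∀ y : Xd, μ (ball y (r / 2)) =
        ENNReal.ofReal ((r / 2) ^ d) * μ (ball 0 1) := by
      intro y
      rw [Measure.addHaar_ball μ y (by positivity)]
      congr 2
      exact congrArg _ (finrank_euclideanSpace_fin)
    have hsub : (⋃ y ∈ u, ball y (r / 2)) ⊆ ball x (R + r) := by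
      intro z hz
      simp only [Set.mem_iUnion, exists_prop] at hz
      obtain ⟨y, hy, hzy⟩ := hz
      have h1 : dist y x ≤ R := hu hy
      have h2 : dist z y < r / 2 := hzy
      have : dist z x < R + r := by
        calc dist z x ≤ dist z y + dist y x := dist_triangle _ _ _
          _ < r / 2 + R := by linarith
          _ ≤ R + r := by linarith
      exact this
    have hle : (u.card : ℝ≥0∞) * (ENNReal.ofReal ((r / 2) ^ d) * μ (ball 0 1)) ≤
        ENNReal.ofReal ((R + r) ^ d) * μ (ball 0 1) := by
      have h1 : μ (⋃ y ∈ u, ball y (r / 2)) ≤ μ (ball x (R + r)) := measure_mono hsub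
      rw [hsum] at h1
      have h2 : ∑ y ∈ u, μ (ball y (r / 2)) =
          (u.card : ℝ≥0∞) * (ENNReal.ofReal ((r / 2) ^ d) * μ (ball 0 1)) := by
        rw [Finset.sum_congr rfl (fun y _ => hball y), Finset.sum_const, nsmul_eq_mul]
      rw [h2] at h1
      refine h1.trans ?_
      rw [Measure.addHaar_ball μ x (by positivity)]
      rw [finrank_euclideanSpace_fin]
    have hpos : μ (ball (0 : Xd) 1) ≠ 0 := (measure_ball_pos μ 0 one_pos).ne'
    have hfin : μ (ball (0 : Xd) 1) ≠ ⊤ := measure_ball_lt_top.ne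
    rw [← mul_assoc] at hle
    have hle2 : (u.card : ℝ≥0∞) * ENNReal.ofReal ((r / 2) ^ d) ≤
        ENNReal.ofReal ((R + r) ^ d) :=
      (ENNReal.mul_le_mul_iff_left hpos hfin).mp hle
    have hre : (u.card : ℝ) * ((r / 2) ^ d) ≤ (R + r) ^ d := by
      have := hle2
      rw [← ENNReal.ofReal_natCast, ← ENNReal.ofReal_mul (by positivity)] at this
      exact (ENNReal.ofReal_le_ofReal_iff (by positivity)).mp this
    rw [div_pow]
    rw [le_div_iff₀ (by positivity)]
    exact hre

end Aux2
section Aux3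
open MeasureTheory

variable {X : Type*} [PseudoMetricSpace X]

/-- The defining set of the Assouad spectrum. -/
def specSet (θ : ℝ) (F : Set X) : Set ℝ :=
  {s : ℝ | 0 ≤ s ∧ ∃ C > (0 : ℝ), ∀ R : ℝ, 0 < R → R < 1 → ∀ x ∈ F,
    (coveringNumber (R ^ (1 / θ)) (closedBall x R ∩ F) : ℝ≥0∞)
      ≤ ENNReal.ofReal (C * (R / R ^ (1 / θ)) ^ s)}

lemma assouadSpectrum_eq (θ : ℝ) (F : Set X) :
    assouadSpectrum θ F = sInf (specSet θ F) := rfl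

lemma covcast_le {r : ℝ} {E : Set X} {n : ℕ} {c : ℝ}
    (h1 : coveringNumber r E ≤ (n : ℕ∞)) (h2 : (n : ℝ) ≤ c) :
    (coveringNumber r E : ℝ≥0∞) ≤ ENNReal.ofReal c := by
  calc (coveringNumber r E : ℝ≥0∞) ≤ ((n : ℕ∞) : ℝ≥0∞) := by
        exact_mod_cast ENat.toENNReal_le.mpr h1
    _ = (n : ℝ≥0∞) := by simp
    _ = ENNReal.ofReal n := by rw [ENNReal.ofReal_natCast]
    _ ≤ ENNReal.ofReal c := ENNReal.ofReal_le_ofReal h2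

variable {d : ℕ}
local notation "Xd" => EuclideanSpace ℝ (Fin d)

/-- A quantitative net for subsets of balls in `ℝ^d`, with centres in the set. -/
lemma euclid_net {E : Set Xd} {x : Xd} {R r : ℝ} (hE : E ⊆ closedBall x R)
    (hr : 0 < r) (hR : 0 ≤ R) :
    ∃ t : Finset Xd, ↑t ⊆ E ∧ (E ⊆ ⋃ y ∈ t, closedBall y r) ∧
      (t.card : ℝ) ≤ ((R + r) / (r / 2)) ^ d := by
  obtain ⟨t, h1, h2, h3⟩ := exists_net_of_separated_card_le (r := r) (E := E)
    (N := ⌊((R + r) / (r / 2)) ^ d⌋₊) hr.le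
    (fun u hu hsep => Nat.le_floor (euclid_sep_card_le hr hR u (hu.trans hE) hsep))
  exact ⟨t, h1, h2, le_trans (by exact_mod_cast h3)
    (Nat.floor_le (by positivity))⟩

lemma euclid_cov {E : Set Xd} {x : Xd} {R r : ℝ} (hE : E ⊆ closedBall x R)
    (hr : 0 < r) (hR : 0 ≤ R) :
    (coveringNumber r E : ℝ≥0∞) ≤ ENNReal.ofReal (((R + r) / (r / 2)) ^ d) := by
  obtain ⟨t, h1, h2, h3⟩ := exists_net_of_separated_card_le (r := r) (E := E)
    (N := ⌊((R + r) / (r / 2)) ^ d⌋₊) hr.le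
    (fun u hu hsep => Nat.le_floor (euclid_sep_card_le hr hR u (hu.trans hE) hsep))
  exact covcast_le ((coveringNumber_le_card h2).trans (by exact_mod_cast h3))
    (Nat.floor_le (by positivity))

/-- `d` always belongs to the spectrum set, for `θ ∈ (0,1)`. -/
lemma d_mem_specSet {θ : ℝ} (hθ0 : 0 < θ) (hθ1 : θ < 1) (E : Set Xd) :
    (d : ℝ) ∈ specSet θ E := by
  refine ⟨Nat.cast_nonneg d, (4 : ℝ) ^ d, by positivity, fun R hR0 hR1 x hx => ?_⟩
  set r := R ^ (1 / θ) with hrdef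
  have hrpos : 0 < r := Real.rpow_pos_of_pos hR0 _
  have hrR : r ≤ R := by
    have h1 : (1 : ℝ) ≤ 1 / θ := by
      rw [le_div_iff₀ hθ0]; linarith
    calc r = R ^ (1 / θ) := rfl
      _ ≤ R ^ (1 : ℝ) := Real.rpow_le_rpow_of_exponent_ge hR0 hR1.le h1
      _ = R := Real.rpow_one R
  have h1 : (coveringNumber r (closedBall x R ∩ E) : ℝ≥0∞) ≤
      ENNReal.ofReal (((R + r) / (r / 2)) ^ d) :=
    euclid_cov (Set.inter_subset_left) hrpos hR0.le
  refine h1.trans (ENNReal.ofReal_le_ofReal ?_)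
  have hbase : (R + r) / (r / 2) ≤ 4 * (R / r) := by
    rw [div_le_iff₀ (by positivity)]
    have : 4 * (R / r) * (r / 2) = 2 * R := by field_simp; ring
    rw [this]; linarith
  calc ((R + r) / (r / 2)) ^ d ≤ (4 * (R / r)) ^ d := by
        refine pow_le_pow_left₀ (by positivity) hbase d
    _ = 4 ^ d * (R / r) ^ d := mul_pow 4 (R / r) d
    _ = 4 ^ d * (R / r) ^ (d : ℝ) := by rw [Real.rpow_natCast]

lemma specSet_nonempty {θ : ℝ} (hθ0 : 0 < θ) (hθ1 : θ < 1) (E : Set Xd) :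
    (specSet θ E).Nonempty := ⟨d, d_mem_specSet hθ0 hθ1 E⟩

lemma specSet_bddBelow (θ : ℝ) (F : Set X) : BddBelow (specSet θ F) :=
  ⟨0, fun _s hs => hs.1⟩

lemma assouadSpectrum_nonneg (θ : ℝ) (F : Set X) : 0 ≤ assouadSpectrum θ F :=
  Real.sInf_nonneg (fun _s hs => hs.1)

lemma assouadSpectrum_le_d {θ : ℝ} (hθ0 : 0 < θ) (hθ1 : θ < 1) (E : Set Xd) :
    assouadSpectrum θ E ≤ d :=
  csInf_le (specSet_bddBelow θ E) (d_mem_specSet hθ0 hθ1 E)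

/-- The spectrum set is upward closed when `θ ∈ (0,1)`. -/
lemma specSet_upward {θ : ℝ} (hθ0 : 0 < θ) (hθ1 : θ < 1) (F : Set X) {s s' : ℝ}
    (hs : s ∈ specSet θ F) (hss' : s ≤ s') : s' ∈ specSet θ F := by
  obtain ⟨hs0, C, hC, hbound⟩ := hs
  refine ⟨hs0.trans hss', C, hC, fun R hR0 hR1 x hx => ?_⟩
  refine (hbound R hR0 hR1 x hx).trans (ENNReal.ofReal_le_ofReal ?_)
  have hrpos : (0:ℝ) < R ^ (1 / θ) := Real.rpow_pos_of_pos hR0 _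
  have hrR : R ^ (1 / θ) ≤ R := by
    have h1 : (1 : ℝ) ≤ 1 / θ := by rw [le_div_iff₀ hθ0]; linarith
    calc R ^ (1 / θ) ≤ R ^ (1 : ℝ) := Real.rpow_le_rpow_of_exponent_ge hR0 hR1.le h1
      _ = R := Real.rpow_one R
  have hone : (1 : ℝ) ≤ R / R ^ (1 / θ) := (one_le_div hrpos).mpr hrR
  exact mul_le_mul_of_nonneg_left
    (Real.rpow_le_rpow_of_exponent_le hone hss') hC.le

/-- From a strict bound on the spectrum, membership of the bound in the spectrum set. -/
lemma mem_specSet_of_lt {θ : ℝ} (hθ0 : 0 < θ) (hθ1 : θ < 1) (E : Set Xd) {s : ℝ}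
    (hs : assouadSpectrum θ E < s) : s ∈ specSet θ E := by
  obtain ⟨m, hm, hms⟩ := exists_lt_of_csInf_lt (specSet_nonempty hθ0 hθ1 E) hs
  exact specSet_upward hθ0 hθ1 E hm hms.le

lemma genUpperBoxDim_nonneg (E : Set X) : 0 ≤ genUpperBoxDim E := by
  rw [genUpperBoxDim, Filter.limsup_eq]
  refine Real.sInf_nonneg (fun a ha => ?_)
  have ha' : ∀ᶠ θ : ℝ in nhdsWithin 0 (Set.Ioi 0), assouadSpectrum θ E ≤ a := ha
  obtain ⟨θ, hθ⟩ := ha'.exists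
  exact (assouadSpectrum_nonneg θ E).trans hθ

lemma eventually_mem_Ioo : ∀ᶠ θ : ℝ in nhdsWithin 0 (Set.Ioi 0), θ ∈ Set.Ioo (0:ℝ) 1 := by
  have h1 : Set.Ioo (0:ℝ) 1 ∈ nhdsWithin 0 (Set.Ioi 0) :=
    Ioo_mem_nhdsGT_of_mem (by norm_num : (0:ℝ) ∈ Set.Ico 0 1)
  exact h1

lemma genUpperBoxDim_le_d (E : Set Xd) : genUpperBoxDim E ≤ d := by
  rw [genUpperBoxDim, Filter.limsup_eq]
  refine csInf_le ⟨0, fun a ha => ?_⟩ ?_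
  · have ha' : ∀ᶠ θ : ℝ in nhdsWithin 0 (Set.Ioi 0), assouadSpectrum θ E ≤ a := ha
    obtain ⟨θ, hθ⟩ := ha'.exists
    exact (assouadSpectrum_nonneg θ E).trans hθ
  · exact eventually_mem_Ioo.mono (fun θ hθ => assouadSpectrum_le_d hθ.1 hθ.2 E)

/-- Extraction of a good small `θ` from a strict bound on `genUpperBoxDim`. -/
lemma exists_theta_of_genUpperBoxDim_lt {E : Set Xd} {s₁ ε : ℝ}
    (h : genUpperBoxDim E < s₁) (hε : 0 < ε) :
    ∃ θ : ℝ, 0 < θ ∧ θ < 1 ∧ θ < ε ∧ assouadSpectrum θ E < s₁ := by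
  rw [genUpperBoxDim, Filter.limsup_eq] at h
  have hne : {a : ℝ | ∀ᶠ θ in nhdsWithin 0 (Set.Ioi 0), assouadSpectrum θ E ≤ a}.Nonempty := by
    refine ⟨d, eventually_mem_Ioo.mono (fun θ hθ => assouadSpectrum_le_d hθ.1 hθ.2 E)⟩
  obtain ⟨a, ha, has⟩ := exists_lt_of_csInf_lt hne h
  have ha' : ∀ᶠ θ : ℝ in nhdsWithin 0 (Set.Ioi 0), assouadSpectrum θ E ≤ a := ha
  have h2 : ∀ᶠ θ : ℝ in nhdsWithin 0 (Set.Ioi 0),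
      θ ∈ Set.Ioo (0:ℝ) 1 ∧ θ ∈ Set.Ioo (0:ℝ) ε ∧ assouadSpectrum θ E ≤ a := by
    refine eventually_mem_Ioo.and (Filter.Eventually.and ?_ ha')
    exact Ioo_mem_nhdsGT_of_mem (by constructor <;> [norm_num; exact hε])
  obtain ⟨θ, h3, h4, h5⟩ := h2.exists
  exact ⟨θ, h3.1, h3.2, h4.2, lt_of_le_of_lt h5 has⟩

end Aux3
section Aux4

/-- In a real normed space, disjoint closed balls have far-apart centres. -/
lemma dist_gt_of_disjoint_closedBall {V : Type*} [NormedAddCommGroup V] [NormedSpace ℝ V]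
    {x y : V} {r₁ r₂ : ℝ} (h1 : 0 ≤ r₁) (h2 : 0 ≤ r₂)
    (hd : Disjoint (closedBall x r₁) (closedBall y r₂)) : r₁ + r₂ < dist x y := by
  by_contra hc
  push_neg at hc
  set T := r₁ + r₂ with hT
  rcases eq_or_lt_of_le (by positivity : (0:ℝ) ≤ T) with hT0 | hT0
  · have hr1 : r₁ = 0 := by linarith [abs_nonneg r₁]
    have hr2 : r₂ = 0 := by linarith
    have hxy : dist x y = 0 := le_antisymm (by rw [← hT0] at hc; exact hc) dist_nonneg
    exact Set.disjoint_left.mp hd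
      (show x ∈ closedBall x r₁ by simp [hr1])
      (show x ∈ closedBall y r₂ by rw [mem_closedBall, hxy, hr2])
  · set z := x + (r₁ / T) • (y - x) with hz
    have hzx : dist z x ≤ r₁ := by
      rw [dist_eq_norm]
      have : z - x = (r₁ / T) • (y - x) := by rw [hz]; abel
      rw [this, norm_smul, Real.norm_eq_abs, abs_of_nonneg (by positivity)]
      have hnorm : ‖y - x‖ = dist x y := by rw [← dist_eq_norm, dist_comm]
      rw [hnorm]
      calc r₁ / T * dist x y ≤ r₁ / T * T := by
            exact mul_le_mul_of_nonneg_left hc (by positivity)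
        _ = r₁ := by field_simp
    have hzy : dist z y ≤ r₂ := by
      rw [dist_eq_norm]
      have : z - y = (r₂ / T) • (x - y) := by
        rw [hz]
        have hsum : r₁ / T + r₂ / T = 1 := by field_simp; exact hT.symm
        have : x + (r₁ / T) • (y - x) - y = (1 - r₁ / T) • (x - y) := by
          rw [sub_smul, one_smul, smul_sub, smul_sub]
          abel
        rw [this, ← hsum]
        ring_nf
      rw [this, norm_smul, Real.norm_eq_abs, abs_of_nonneg (by positivity)]
      rw [← dist_eq_norm]
      calc r₂ / T * dist x y ≤ r₂ / T * T := mul_le_mul_of_nonneg_left hc (by positivity)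
        _ = r₂ := by field_simp
    exact Set.disjoint_left.mp hd (mem_closedBall.mpr hzx) (mem_closedBall.mpr hzy)

variable {d : ℕ}
local notation "Xd" => EuclideanSpace ℝ (Fin d)

/-- Step (a): under an Assouad-spectrum-type bound on `E`, bounded pieces of `E` admit
quantitatively small covers at dyadic scales. -/
lemma cov_piece {E : Set Xd} {x0 : Xd} {r0 : ℝ} (hr0 : 0 ≤ r0) {θ s₁ C : ℝ}
    (hθ0 : 0 < θ) (hθ1 : θ < 1) (hs₁0 : 0 ≤ s₁) (hC : 0 < C)
    (hbound : ∀ R : ℝ, 0 < R → R < 1 → ∀ x ∈ E,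
      (coveringNumber (R ^ (1 / θ)) (closedBall x R ∩ E) : ℝ≥0∞)
        ≤ ENNReal.ofReal (C * (R / R ^ (1 / θ)) ^ s₁)) (k : ℕ) :
    ∃ t : Finset Xd, ((E ∩ closedBall x0 r0) ⊆ ⋃ y ∈ t, closedBall y ((1/2 : ℝ) ^ (k+1))) ∧
      (t.card : ℝ) ≤ ((4 * (r0 + 1)) ^ d * C) * ((1/2 : ℝ) ^ (k+1)) ^ (-(θ * d + (1 - θ) * s₁)) := by
  classical
  set E₀ := E ∩ closedBall x0 r0 with hE₀
  set ρ : ℝ := (1/2 : ℝ) ^ (k+1) with hρ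
  have hρ0 : 0 < ρ := by positivity
  have hρ1 : ρ < 1 := by
    rw [hρ]
    calc (1/2 : ℝ) ^ (k+1) ≤ (1/2 : ℝ) ^ 1 :=
          pow_le_pow_of_le_one (by norm_num) (by norm_num) (by omega)
      _ < 1 := by norm_num
  set R : ℝ := ρ ^ θ with hRdef
  have hR0 : 0 < R := Real.rpow_pos_of_pos hρ0 _
  have hR1 : R < 1 := Real.rpow_lt_one hρ0.le hρ1 hθ0
  have hRθ : R ^ (1 / θ) = ρ := by
    rw [hRdef, ← Real.rpow_mul hρ0.le, mul_one_div_cancel hθ0.ne', Real.rpow_one]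
  -- a net of E₀ at scale R/2 with centres in E₀
  obtain ⟨t, ht1, ht2, ht3⟩ := euclid_net (E := E₀) (x := x0) (R := r0) (r := R / 2)
    Set.inter_subset_right (by positivity) hr0
  set n : ℕ := ⌊C * (R / ρ) ^ s₁⌋₊ with hn
  -- each ball of the net, fattened to radius R, has small covering number at scale ρ
  have hper : ∀ y ∈ t, coveringNumber ρ (closedBall y R ∩ E) ≤ (n : ℕ∞) := by
    intro y hy
    have hyE : y ∈ E := (ht1 hy).1
    have := hbound R hR0 hR1 y hyE
    rw [hRθ] at this
    exact coveringNumber_le_floor this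
  have hcover : E₀ ⊆ ⋃ y ∈ t, (closedBall y R ∩ E) := by
    intro z hz
    have := ht2 hz
    simp only [Set.mem_iUnion, exists_prop] at this ⊢
    obtain ⟨y, hyt, hzy⟩ := this
    exact ⟨y, hyt, closedBall_subset_closedBall (by linarith) hzy, hz.1⟩
  have hcov_le : coveringNumber ρ E₀ ≤ ((t.card * n : ℕ) : ℕ∞) := by
    calc coveringNumber ρ E₀ ≤ coveringNumber ρ (⋃ y ∈ t, (closedBall y R ∩ E)) :=
          coveringNumber_mono hcover
      _ ≤ ∑ y ∈ t, coveringNumber ρ (closedBall y R ∩ E) :=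
          coveringNumber_biUnion_le ρ t _
      _ ≤ ∑ _y ∈ t, (n : ℕ∞) := Finset.sum_le_sum hper
      _ = ((t.card * n : ℕ) : ℕ∞) := by
          rw [Finset.sum_const, nsmul_eq_mul]; push_cast; ring
  obtain ⟨t', ht'c, ht'card⟩ := exists_cover_of_coveringNumber_le hcov_le
  refine ⟨t', ht'c, ?_⟩
  -- the real cardinality estimate
  have hRρpos : 0 < R / ρ := by positivity
  have hnle : (n : ℝ) ≤ C * (R / ρ) ^ s₁ :=
    Nat.floor_le (mul_nonneg hC.le (Real.rpow_nonneg hRρpos.le _))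
  have e1 : R ^ d = ρ ^ (θ * (d : ℝ)) := by
    rw [hRdef, ← Real.rpow_natCast (ρ ^ θ) d, ← Real.rpow_mul hρ0.le]
  have e2 : (R / ρ) ^ s₁ = ρ ^ ((θ - 1) * s₁) := by
    rw [hRdef, show ρ ^ θ / ρ = ρ ^ (θ - 1) from by
      rw [Real.rpow_sub hρ0, Real.rpow_one], ← Real.rpow_mul hρ0.le]
  have hbase : (r0 + R / 2) / (R / 2 / 2) ≤ 4 * (r0 + 1) / R := by
    rw [div_le_div_iff₀ (by positivity) (by positivity)]
    nlinarith [hR0, hR1, hr0]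
  calc (t'.card : ℝ) ≤ ((t.card * n : ℕ) : ℝ) := by exact_mod_cast ht'card
    _ = (t.card : ℝ) * n := by push_cast; ring
    _ ≤ ((r0 + R / 2) / (R / 2 / 2)) ^ d * (C * (R / ρ) ^ s₁) := by
        refine mul_le_mul ht3 hnle (Nat.cast_nonneg n) (by positivity)
    _ ≤ (4 * (r0 + 1) / R) ^ d * (C * (R / ρ) ^ s₁) := by
        refine mul_le_mul_of_nonneg_right (pow_le_pow_left₀ (by positivity) hbase d) ?_
        exact mul_nonneg hC.le (Real.rpow_nonneg hRρpos.le _)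
    _ = ((4 * (r0 + 1)) ^ d / ρ ^ (θ * (d:ℝ))) * (C * ρ ^ ((θ - 1) * s₁)) := by
        rw [div_pow, e1, e2]
    _ = ((4 * (r0 + 1)) ^ d * C) * (ρ ^ (-(θ * (d:ℝ))) * ρ ^ ((θ - 1) * s₁)) := by
        rw [Real.rpow_neg hρ0.le, div_eq_mul_inv]; ring
    _ = ((4 * (r0 + 1)) ^ d * C) * ((1/2 : ℝ) ^ (k+1)) ^ (-(θ * d + (1 - θ) * s₁)) := by
        rw [← Real.rpow_add hρ0, ← hρ]
        congr 1
        ring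

end Aux4
section Aux5

/-- tsum bounded by (number of nonzero terms) × (uniform bound). -/
lemma tsum_le_card_mul_of_bound {α : Type*} (g : α → ℝ≥0∞) (M : ℕ) (c : ℝ≥0∞)
    (hc : ∀ a, g a ≤ c)
    (hcard : ∀ F : Finset α, (∀ a ∈ F, g a ≠ 0) → F.card ≤ M) :
    ∑' a, g a ≤ (M : ℝ≥0∞) * c := by
  classical
  rw [ENNReal.tsum_eq_iSup_sum]
  refine iSup_le fun F => ?_
  have h1 : ∑ a ∈ F, g a = ∑ a ∈ F.filter (fun a => g a ≠ 0), g a := by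
    rw [Finset.sum_filter_ne_zero]
  rw [h1]
  calc ∑ a ∈ F.filter (fun a => g a ≠ 0), g a
      ≤ (F.filter (fun a => g a ≠ 0)).card • c :=
        Finset.sum_le_card_nsmul _ _ c (fun a _ => hc a)
    _ = ((F.filter (fun a => g a ≠ 0)).card : ℝ≥0∞) * c := by rw [nsmul_eq_mul]
    _ ≤ (M : ℝ≥0∞) * c := by
        refine mul_le_mul_left ?_ c
        exact_mod_cast hcard _ (fun a ha => (Finset.mem_filter.mp ha).2)

variable {d : ℕ}
local notation "Xd" => EuclideanSpace ℝ (Fin d)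

/-- Main estimate: under a spectrum bound on `E` with small `θ`, bounded pieces of `E`
have vanishing packing pre-measure in dimension `s > θd + (1-θ)s₁`. -/
lemma packingPre₀_piece_eq_zero {E : Set Xd} {x0 : Xd} {r0 : ℝ} (hr0 : 0 ≤ r0)
    {θ s₁ C s : ℝ} (hθ0 : 0 < θ) (hθ1 : θ < 1) (hs₁0 : 0 ≤ s₁) (hC : 0 < C)
    (hbound : ∀ R : ℝ, 0 < R → R < 1 → ∀ x ∈ E,
      (coveringNumber (R ^ (1 / θ)) (closedBall x R ∩ E) : ℝ≥0∞)
        ≤ ENNReal.ofReal (C * (R / R ^ (1 / θ)) ^ s₁))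
    (hs : θ * d + (1 - θ) * s₁ < s) :
    packingPre₀ s (E ∩ closedBall x0 r0) = 0 := by
  classical
  set E₀ := E ∩ closedBall x0 r0 with hE₀
  set s₂ : ℝ := θ * d + (1 - θ) * s₁ with hs₂
  have hs₂0 : 0 ≤ s₂ := by
    have h1 : (0:ℝ) ≤ θ * d := mul_nonneg hθ0.le (Nat.cast_nonneg d)
    have h2 : (0:ℝ) ≤ (1 - θ) * s₁ := mul_nonneg (by linarith) hs₁0
    linarith
  have hs0 : 0 < s := lt_of_le_of_lt hs₂0 hs
  have h2pos : (0:ℝ) < 1/2 := by norm_num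
  choose T hTcov hTcard using cov_piece hr0 hθ0 hθ1 hs₁0 hC hbound
  set C₁ : ℝ := (4 * (r0 + 1)) ^ d * C with hC₁
  have hC₁0 : 0 < C₁ := by positivity
  set q : ℝ := (1/2 : ℝ) ^ (s - s₂) with hqdef
  have hq0 : 0 < q := Real.rpow_pos_of_pos h2pos _
  have hq1 : q < 1 := Real.rpow_lt_one h2pos.le (by norm_num) (by linarith)
  set K : ℝ := C₁ * (1/2 : ℝ) ^ (-(2 * s₂)) with hKdef
  have hK0 : 0 < K := mul_pos hC₁0 (Real.rpow_pos_of_pos h2pos _)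
  -- algebraic identity for the per-scale bound
  have halg : ∀ k : ℕ, C₁ * ((1/2:ℝ) ^ (k+2)) ^ (-s₂) * ((1/2:ℝ) ^ k) ^ s = K * q ^ k := by
    intro k
    have eL1 : ((1/2:ℝ) ^ (k+2)) ^ (-s₂) = (1/2:ℝ) ^ ((((k:ℝ)) + 2) * (-s₂)) := by
      rw [← Real.rpow_natCast (1/2:ℝ) (k+2), ← Real.rpow_mul h2pos.le]
      push_cast; ring_nf
    have eL2 : ((1/2:ℝ) ^ k) ^ s = (1/2:ℝ) ^ ((k:ℝ) * s) := by
      rw [← Real.rpow_natCast (1/2:ℝ) k, ← Real.rpow_mul h2pos.le]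
    have eR : q ^ k = (1/2:ℝ) ^ ((s - s₂) * (k:ℝ)) := by
      rw [hqdef, ← Real.rpow_natCast ((1/2:ℝ) ^ (s - s₂)) k, ← Real.rpow_mul h2pos.le]
    have e3 : (1/2:ℝ) ^ ((((k:ℝ)) + 2) * (-s₂)) * (1/2:ℝ) ^ ((k:ℝ) * s) =
        (1/2:ℝ) ^ (-(2 * s₂)) * (1/2:ℝ) ^ ((s - s₂) * (k:ℝ)) := by
      rw [← Real.rpow_add h2pos, ← Real.rpow_add h2pos]
      congr 1
      ring
    calc C₁ * ((1/2:ℝ) ^ (k+2)) ^ (-s₂) * ((1/2:ℝ) ^ k) ^ s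
        = C₁ * ((1/2:ℝ) ^ ((((k:ℝ)) + 2) * (-s₂)) * (1/2:ℝ) ^ ((k:ℝ) * s)) := by
          rw [eL1, eL2]; ring
      _ = C₁ * ((1/2:ℝ) ^ (-(2 * s₂)) * (1/2:ℝ) ^ ((s - s₂) * (k:ℝ))) := by rw [e3]
      _ = K * q ^ k := by rw [eR, hKdef]; ring
  -- the key premeasure bound at scale (1/2)^(m+1)
  have key : ∀ m : ℕ, packingPre s ((1/2:ℝ) ^ (m+1)) E₀ ≤
      ENNReal.ofReal ((K * (1 - q)⁻¹) * q ^ m) := by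
    intro m
    rw [packingPre]
    refine iSup_le fun D => iSup_le fun hDc => iSup_le fun hDmem => iSup_le fun hDdisj => ?_
    set δ : ℝ := (1/2:ℝ) ^ (m+1) with hδ
    set κ : Xd × ℝ → ℕ := fun p => sInf {k | (1/2:ℝ) ^ (k+2) < p.2} with hκ
    set f : ↥D → ℝ≥0∞ := fun p => ENNReal.ofReal ((2 * (p : Xd × ℝ).2) ^ s) with hf
    -- properties of κ on D
    have hκprop : ∀ p : Xd × ℝ, p ∈ D →
        (1/2:ℝ) ^ (κ p + 2) < p.2 ∧ p.2 ≤ (1/2:ℝ) ^ (κ p + 1) ∧ m ≤ κ p := by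
      intro p hp
      obtain ⟨hp1, hp2, hp3⟩ := hDmem p hp
      have hne : {k | (1/2:ℝ) ^ (k+2) < p.2}.Nonempty := by
        obtain ⟨N, hN⟩ := exists_pow_lt_of_lt_one hp2 (by norm_num : (1/2:ℝ) < 1)
        exact ⟨N, lt_of_le_of_lt (pow_le_pow_of_le_one h2pos.le (by norm_num) (by omega)) hN⟩
      have h1 : (1/2:ℝ) ^ (κ p + 2) < p.2 := Nat.sInf_mem hne
      have h2 : p.2 ≤ (1/2:ℝ) ^ (κ p + 1) := by
        rcases Nat.eq_zero_or_pos (κ p) with h0 | hpos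
        · rw [h0]
          calc p.2 ≤ δ := hp3
            _ ≤ (1/2:ℝ) ^ 1 := by
                rw [hδ]
                exact pow_le_pow_of_le_one h2pos.le (by norm_num) (by omega)
            _ = (1/2:ℝ) ^ (0 + 1) := by norm_num
        · have hlt : κ p - 1 < κ p := Nat.sub_lt hpos one_pos
          have hnot : κ p - 1 ∉ {k | (1/2:ℝ) ^ (k+2) < p.2} :=
            Nat.notMem_of_lt_sInf hlt
          simp only [Set.mem_setOf_eq, not_lt] at hnot
          have : κ p - 1 + 2 = κ p + 1 := by omega
          rwa [this] at hnot
      refine ⟨h1, h2, ?_⟩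
      have h3 : (1/2:ℝ) ^ (κ p + 2) < (1/2:ℝ) ^ (m+1) := lt_of_lt_of_le h1 hp3
      have h4 : m + 1 < κ p + 2 := by
        by_contra hcon
        push_neg at hcon
        exact absurd (pow_le_pow_of_le_one h2pos.le (by norm_num) hcon)
          (not_le.mpr h3)
      omega
    -- split the sum along dyadic scales
    have hsplit : ∑' p : D, ENNReal.ofReal ((2 * (p : Xd × ℝ).2) ^ s) =
        ∑' k : ℕ, ∑' p : D, (if κ (p : Xd × ℝ) = k then f p else 0) := by
      rw [← ENNReal.tsum_comm]
      refine tsum_congr fun p => ?_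
      have h1 : ∑' k : ℕ, (if κ (p : Xd × ℝ) = k then f p else 0) = f p := by
        refine (tsum_eq_single (κ (p : Xd × ℝ)) (fun k hk => ?_)).trans ?_
        · exact if_neg fun h => hk h.symm
        · exact if_pos rfl
      exact h1.symm
    rw [hsplit]
    -- bound each scale
    have hinner : ∀ k : ℕ, ∑' p : D, (if κ (p : Xd × ℝ) = k then f p else 0) ≤
        (if k < m then 0 else ENNReal.ofReal (K * q ^ k)) := by
      intro k
      by_cases hkm : k < m
      · rw [if_pos hkm]
        refine le_of_eq (ENNReal.tsum_eq_zero.mpr fun p => ?_)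
        refine if_neg fun h => ?_
        have h3 := (hκprop _ p.property).2.2
        omega
      · rw [if_neg hkm]
        -- count the packing balls at scale k using the cover T (k+1)
        have hcard : ∀ F : Finset ↥D,
            (∀ p ∈ F, (if κ (p : Xd × ℝ) = k then f p else 0) ≠ 0) →
            F.card ≤ (T (k+1)).card := by
          intro F hF
          have hFk : ∀ p ∈ F, κ (p : Xd × ℝ) = k := by
            intro p hp
            by_contra hne
            exact hF p hp (if_neg hne)
          set cf : ↥D → Xd := fun p => (p : Xd × ℝ).1 with hcf
          set u : Finset Xd := F.image cf with hu
          have hinj : Set.InjOn cf ↑F := by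
            intro p hp p' hp' hpp'
            by_contra hne
            have hvalne : (p : Xd × ℝ) ≠ (p' : Xd × ℝ) := fun h => hne (Subtype.ext h)
            have hdisj := hDdisj p.property p'.property hvalne
            have hppos := (hDmem _ p.property).2.1
            have hmem1 : (p : Xd × ℝ).1 ∈ closedBall (p : Xd × ℝ).1 (p : Xd × ℝ).2 := by
              simp [mem_closedBall, hppos.le]
            have hpp'' : (p : Xd × ℝ).1 = (p' : Xd × ℝ).1 := hpp'
            have hmem2 : (p : Xd × ℝ).1 ∈ closedBall (p' : Xd × ℝ).1 (p' : Xd × ℝ).2 := by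
              rw [hpp'']
              simp [mem_closedBall, ((hDmem _ p'.property).2.1).le]
            exact Set.disjoint_left.mp hdisj hmem1 hmem2
          have hucard : u.card = F.card := Finset.card_image_of_injOn hinj
          rw [← hucard]
          refine separated_card_le_of_cover (hTcov (k+1)) u ?_ ?_
          · intro a ha
            obtain ⟨p, hpF, rfl⟩ := Finset.mem_image.mp (by exact_mod_cast ha)
            exact (hDmem _ p.property).1
          · intro a ha b hb hab
            obtain ⟨p, hpF, rfl⟩ := Finset.mem_image.mp ha
            obtain ⟨p', hp'F, rfl⟩ := Finset.mem_image.mp hb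
            have hvalne : (p : Xd × ℝ) ≠ (p' : Xd × ℝ) := by
              intro h; exact hab (congrArg Prod.fst h)
            have hdisj := hDdisj p.property p'.property hvalne
            have hgt := dist_gt_of_disjoint_closedBall
              ((hDmem _ p.property).2.1).le ((hDmem _ p'.property).2.1).le hdisj
            have h1 := (hκprop _ p.property).1
            have h2 := (hκprop _ p'.property).1
            rw [hFk p hpF] at h1
            rw [hFk p' hp'F] at h2
            have : (1/2:ℝ) ^ (k+1+1) = (1/2:ℝ) ^ (k+2) := by ring_nf
            rw [this]
            linarith
        have hbound2 : ∀ p : ↥D, (if κ (p : Xd × ℝ) = k then f p else 0) ≤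
            ENNReal.ofReal (((1/2:ℝ) ^ k) ^ s) := by
          intro p
          by_cases hk : κ (p : Xd × ℝ) = k
          · rw [if_pos hk, hf]
            refine ENNReal.ofReal_le_ofReal ?_
            have h2p := (hκprop _ p.property).2.1
            rw [hk] at h2p
            have hppos := (hDmem _ p.property).2.1
            refine Real.rpow_le_rpow (by positivity) ?_ hs0.le
            calc 2 * (p : Xd × ℝ).2 ≤ 2 * (1/2:ℝ) ^ (k+1) := by linarith
              _ = (1/2:ℝ) ^ k := by ring
          · rw [if_neg hk]; exact zero_le
        calc ∑' p : D, (if κ (p : Xd × ℝ) = k then f p else 0)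
            ≤ ((T (k+1)).card : ℝ≥0∞) * ENNReal.ofReal (((1/2:ℝ) ^ k) ^ s) :=
              tsum_le_card_mul_of_bound _ _ _ hbound2 hcard
          _ ≤ ENNReal.ofReal (C₁ * ((1/2:ℝ) ^ (k+2)) ^ (-s₂)) *
                ENNReal.ofReal (((1/2:ℝ) ^ k) ^ s) := by
              refine mul_le_mul_left ?_ _
              rw [← ENNReal.ofReal_natCast]
              refine ENNReal.ofReal_le_ofReal ?_
              have h := hTcard (k+1)
              rw [show k+1+1 = k+2 by ring] at h
              rw [hs₂]
              exact h
          _ = ENNReal.ofReal (C₁ * ((1/2:ℝ) ^ (k+2)) ^ (-s₂) * ((1/2:ℝ) ^ k) ^ s) := by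
              rw [← ENNReal.ofReal_mul (by positivity)]
          _ = ENNReal.ofReal (K * q ^ k) := by rw [halg k]
    refine le_trans (ENNReal.tsum_le_tsum hinner) ?_
    -- geometric series bound
    rw [ENNReal.tsum_eq_iSup_sum]
    refine iSup_le fun F => ?_
    have hstep : ∑ k ∈ F, (if k < m then 0 else ENNReal.ofReal (K * q ^ k)) =
        ∑ k ∈ F.filter (fun k => ¬ k < m), ENNReal.ofReal (K * q ^ k) := by
      rw [Finset.sum_filter]
      refine Finset.sum_congr rfl fun k _ => ?_
      by_cases hk : k < m <;> simp [hk]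
    rw [hstep]
    rw [← ENNReal.ofReal_sum_of_nonneg (fun k _ => by positivity)]
    refine ENNReal.ofReal_le_ofReal ?_
    set F' := F.filter (fun k => ¬ k < m) with hF'
    have hge : ∀ k ∈ F', m ≤ k := fun k hk =>
      not_lt.mp (Finset.mem_filter.mp hk).2
    have hsum_eq : ∑ k ∈ F', K * q ^ k = ∑ j ∈ F'.image (fun k => k - m), K * q ^ (m + j) := by
      rw [Finset.sum_image (fun a ha b hb hab => by
        have := hge a ha; have := hge b hb; omega)]
      refine Finset.sum_congr rfl fun k hk => ?_
      rw [Nat.add_sub_cancel' (hge k hk)]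
    rw [hsum_eq]
    have hsummable : Summable (fun j : ℕ => K * q ^ (m + j)) := by
      have : (fun j : ℕ => K * q ^ (m + j)) = fun j : ℕ => (K * q ^ m) * q ^ j := by
        funext j; rw [pow_add]; ring
      rw [this]
      exact (summable_geometric_of_lt_one hq0.le hq1).mul_left _
    calc ∑ j ∈ F'.image (fun k => k - m), K * q ^ (m + j)
        ≤ ∑' j : ℕ, K * q ^ (m + j) :=
          hsummable.sum_le_tsum _ (fun j _ => by positivity)
      _ = (K * q ^ m) * (1 - q)⁻¹ := by
          have : (fun j : ℕ => K * q ^ (m + j)) = fun j : ℕ => (K * q ^ m) * q ^ j := by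
            funext j; rw [pow_add]; ring
          rw [this, tsum_mul_left, tsum_geometric_of_lt_one hq0.le hq1]
      _ = K * (1 - q)⁻¹ * q ^ m := by ring
  -- conclude: the infimum over δ is 0
  refine le_antisymm ?_ (zero_le)
  have hlim : Filter.Tendsto (fun m : ℕ => ENNReal.ofReal ((K * (1 - q)⁻¹) * q ^ m))
      Filter.atTop (nhds 0) := by
    have h1 : Filter.Tendsto (fun m : ℕ => (K * (1 - q)⁻¹) * q ^ m) Filter.atTop (nhds 0) := by
      have := (tendsto_pow_atTop_nhds_zero_of_lt_one hq0.le hq1).const_mul (K * (1 - q)⁻¹)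
      simpa using this
    have h2 := (ENNReal.continuous_ofReal.tendsto 0).comp h1
    rw [ENNReal.ofReal_zero] at h2; exact h2
  refine ge_of_tendsto' hlim fun m => ?_
  calc packingPre₀ s E₀ ≤ packingPre s ((1/2:ℝ) ^ (m+1)) E₀ := by
        rw [packingPre₀]
        exact iInf_le_of_le ((1/2:ℝ) ^ (m+1)) (iInf_le_of_le (by positivity) le_rfl)
    _ ≤ _ := key m

end Aux5
section Aux6
variable {d : ℕ}
local notation "Xd" => EuclideanSpace ℝ (Fin d)

lemma packingPre₀_piece_of_genUpperBoxDim_lt {E : Set Xd} {s : ℝ}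
    (h : genUpperBoxDim E < s) (x0 : Xd) (n : ℕ) :
    packingPre₀ s (E ∩ closedBall x0 ((n : ℝ) + 1)) = 0 := by
  set s₁ : ℝ := (genUpperBoxDim E + s) / 2 with hs₁def
  have hdim0 := genUpperBoxDim_nonneg E
  have hs₁0 : 0 ≤ s₁ := by rw [hs₁def]; linarith
  have hds₁ : genUpperBoxDim E < s₁ := by rw [hs₁def]; linarith
  have hs₁s : s₁ < s := by rw [hs₁def]; linarith
  set ε : ℝ := (s - s₁) / (d + 1) with hεdef
  have hε0 : 0 < ε := by
    rw [hεdef]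
    exact div_pos (by linarith) (by positivity)
  obtain ⟨θ, hθ0, hθ1, hθε, hθspec⟩ := exists_theta_of_genUpperBoxDim_lt hds₁ hε0
  obtain ⟨hs₁0', C, hC, hbound⟩ := mem_specSet_of_lt hθ0 hθ1 E hθspec
  have hs₂lt : θ * d + (1 - θ) * s₁ < s := by
    have h1 : θ * d ≤ ε * d := mul_le_mul_of_nonneg_right hθε.le (Nat.cast_nonneg d)
    have h2 : (1 - θ) * s₁ ≤ s₁ := by nlinarith
    have h3 : ε * (d : ℝ) < s - s₁ := by
      rw [hεdef]
      rw [div_mul_eq_mul_div, div_lt_iff₀ (by positivity)]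
      nlinarith [hs₁s]
    linarith
  exact packingPre₀_piece_eq_zero (by positivity) hθ0 hθ1 hs₁0 hC hbound hs₂lt

lemma packingMeasure_eq_zero_of_cover {F : Set Xd} {G : ℕ → Set Xd}
    (hcov : F ⊆ ⋃ i, G i) {s : ℝ} (hi : ∀ i, genUpperBoxDim (G i) < s) :
    packingMeasure s F = 0 := by
  set H : ℕ → Set Xd := fun j =>
    G (Nat.unpair j).1 ∩ closedBall 0 (((Nat.unpair j).2 : ℝ) + 1) with hH
  have hFH : F ⊆ ⋃ j, H j := by
    intro x hx
    obtain ⟨_, ⟨i, rfl⟩, hxi⟩ := hcov hx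
    obtain ⟨n, hn⟩ := exists_nat_ge (dist x 0)
    refine Set.mem_iUnion.mpr ⟨Nat.pair i n, ?_⟩
    simp only [hH, Nat.unpair_pair]
    exact ⟨hxi, mem_closedBall.mpr (by linarith)⟩
  have hzero : ∀ j, packingPre₀ s (H j) = 0 := fun j =>
    packingPre₀_piece_of_genUpperBoxDim_lt (hi _) 0 _
  refine le_antisymm ?_ (zero_le)
  calc packingMeasure s F ≤ ∑' j, packingPre₀ s (H j) :=
        iInf_le_of_le H (iInf_le_of_le hFH le_rfl)
    _ = 0 := by simp [hzero]

/-- `packingDim ≤` any element of the MGB defining set. -/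
lemma packingDim_le_of_cover {F : Set Xd} {G : ℕ → Set Xd}
    (hcov : F ⊆ ⋃ i, G i) : packingDim F ≤ ⨆ i, genUpperBoxDim (G i) := by
  set a : ℝ := ⨆ i, genUpperBoxDim (G i) with ha
  have hbdd : BddAbove (Set.range fun i => genUpperBoxDim (G i)) := by
    refine ⟨d, ?_⟩
    rintro x ⟨i, rfl⟩
    exact genUpperBoxDim_le_d (G i)
  have ha0 : 0 ≤ a := (genUpperBoxDim_nonneg (G 0)).trans (le_ciSup hbdd 0)
  refine le_of_forall_pos_le_add fun ε hε => ?_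
  have hmem : a + ε ∈ {s : ℝ | 0 ≤ s ∧ packingMeasure s F = 0} := by
    refine ⟨by linarith, packingMeasure_eq_zero_of_cover hcov fun i => ?_⟩
    calc genUpperBoxDim (G i) ≤ a := le_ciSup hbdd i
      _ < a + ε := by linarith
  exact csInf_le ⟨0, fun x hx => hx.1⟩ hmem

end Aux6
section Aux7
variable {X : Type*} [PseudoMetricSpace X]

/-- If the packing pre-measure at some scale is at most 1, covering numbers obey a
power-law bound at small scales. -/
lemma coveringNumber_le_of_packingPre_le {E : Set X} {s δ₀ : ℝ} (hδ₀ : 0 < δ₀)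
    (h : packingPre s δ₀ E ≤ 1) :
    ∀ ρ : ℝ, 0 < ρ → ρ ≤ 2 * δ₀ →
      (coveringNumber ρ E : ℝ≥0∞) ≤ ENNReal.ofReal (ρ ^ (-s)) := by
  classical
  intro ρ hρ0 hρδ
  set r : ℝ := ρ / 2 with hrdef
  have hr0 : 0 < r := by positivity
  have hrδ : r ≤ δ₀ := by rw [hrdef]; linarith
  have hρs : (0:ℝ) < ρ ^ s := Real.rpow_pos_of_pos hρ0 _
  -- separated sets give packings
  have hsep_card : ∀ u : Finset X, ↑u ⊆ E →
      (∀ a ∈ u, ∀ b ∈ u, a ≠ b → ρ < dist a b) → (u.card : ℝ) ≤ ρ ^ (-s) := by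
    intro u hu hsep
    set v : Finset (X × ℝ) := u.image (fun y => (y, r)) with hv
    have hinj : Function.Injective (fun y : X => (y, r)) := fun a b hab =>
      congrArg Prod.fst hab
    have htsum : ∑' p : (↑v : Set (X × ℝ)), ENNReal.ofReal ((2 * (p : X × ℝ).2) ^ s) =
        (u.card : ℝ≥0∞) * ENNReal.ofReal ((2 * r) ^ s) := by
      rw [Finset.tsum_subtype' v (fun p => ENNReal.ofReal ((2 * p.2) ^ s))]
      rw [hv, Finset.sum_image (fun a _ b _ hab => hinj hab)]
      have heq : ∀ x ∈ u, ENNReal.ofReal ((2 * ((x, r) : X × ℝ).2) ^ s) =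
          ENNReal.ofReal ((2 * r) ^ s) := fun x _ => rfl
      rw [Finset.sum_congr rfl heq, Finset.sum_const, nsmul_eq_mul]
    have hle : (u.card : ℝ≥0∞) * ENNReal.ofReal ((2 * r) ^ s) ≤ 1 := by
      rw [← htsum]
      refine le_trans ?_ h
      rw [packingPre]
      refine le_iSup_of_le ↑v ?_
      refine le_iSup_of_le (v.finite_toSet.countable) ?_
      refine le_iSup_of_le ?_ ?_
      · intro p hp
        obtain ⟨y, hy, rfl⟩ := Finset.mem_image.mp hp
        exact ⟨hu hy, hr0, hrδ⟩
      refine le_iSup_of_le ?_ le_rfl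
      · intro p hp q hq hpq
        obtain ⟨a, ha, rfl⟩ := Finset.mem_image.mp hp
        obtain ⟨b, hb, rfl⟩ := Finset.mem_image.mp hq
        have hab : a ≠ b := fun hab => hpq (by rw [hab])
        refine closedBall_disjoint_closedBall ?_
        have := hsep a ha b hb hab
        rw [hrdef]
        simp only
        linarith
    have h2r : (2 : ℝ) * r = ρ := by rw [hrdef]; ring
    rw [h2r] at hle
    have hre : (u.card : ℝ) * ρ ^ s ≤ 1 := by
      rw [← ENNReal.ofReal_natCast, ← ENNReal.ofReal_mul (Nat.cast_nonneg _),
        ← ENNReal.ofReal_one] at hle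
      exact (ENNReal.ofReal_le_ofReal_iff zero_le_one).mp hle
    rw [Real.rpow_neg hρ0.le, inv_eq_one_div, le_div_iff₀ hρs]
    exact hre
  have hN : coveringNumber ρ E ≤ (⌊ρ ^ (-s)⌋₊ : ℕ∞) := by
    obtain ⟨t, _, hcov', hcard⟩ := exists_net_of_separated_card_le hρ0.le
      (fun u hu hsep => Nat.le_floor (hsep_card u hu hsep))
    exact (coveringNumber_le_card hcov').trans (Nat.cast_le.mpr hcard)
  exact covcast_le hN (Nat.floor_le (Real.rpow_nonneg hρ0.le _))

end Aux7
section Aux8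
variable {X : Type*} [PseudoMetricSpace X]

lemma genUpperBoxDim_le_of_packingPre₀_lt_one {E : Set X} {s : ℝ} (hs0 : 0 ≤ s)
    (h : packingPre₀ s E < 1) : genUpperBoxDim E ≤ s := by
  rw [packingPre₀] at h
  obtain ⟨δ₀, h1⟩ := iInf_lt_iff.mp h
  obtain ⟨hδ₀pos, hP⟩ := iInf_lt_iff.mp h1
  have hcov := coveringNumber_le_of_packingPre_le hδ₀pos hP.le
  set C : ℝ := (2 * δ₀) ^ (-s) + 1 with hCdef
  have hC1 : (2 * δ₀) ^ (-s) ≥ 0 := Real.rpow_nonneg (by positivity) _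
  have hC0 : 0 < C := by rw [hCdef]; linarith
  have hspec : ∀ θ : ℝ, 0 < θ → θ < 1 → assouadSpectrum θ E ≤ s / (1 - θ) := by
    intro θ hθ0 hθ1
    have h1θ : (0:ℝ) < 1 - θ := by linarith
    refine csInf_le (specSet_bddBelow θ E) ?_
    refine ⟨by positivity, C, hC0, fun R hR0 hR1 x hx => ?_⟩
    have hρ0 : 0 < R ^ (1/θ) := Real.rpow_pos_of_pos hR0 _
    have hρR : R ^ (1/θ) ≤ R := by
      have hone : (1:ℝ) ≤ 1/θ := by rw [le_div_iff₀ hθ0]; linarith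
      calc R ^ (1/θ) ≤ R ^ (1:ℝ) := Real.rpow_le_rpow_of_exponent_ge hR0 hR1.le hone
        _ = R := Real.rpow_one R
    have hRρ1 : 1 ≤ R / R ^ (1/θ) := (one_le_div hρ0).mpr hρR
    have hpow1 : 1 ≤ (R / R ^ (1/θ)) ^ (s / (1-θ)) := by
      calc (1:ℝ) = (1:ℝ) ^ (s / (1-θ)) := (Real.one_rpow _).symm
        _ ≤ _ := Real.rpow_le_rpow (by norm_num) hRρ1 (by positivity)
    have hmono : (coveringNumber (R ^ (1/θ)) (closedBall x R ∩ E) : ℝ≥0∞) ≤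
        (coveringNumber (R ^ (1/θ)) E : ℝ≥0∞) :=
      ENat.toENNReal_le.mpr (coveringNumber_mono Set.inter_subset_right)
    by_cases hcase : R ^ (1/θ) ≤ 2 * δ₀
    · refine hmono.trans ((hcov _ hρ0 hcase).trans (ENNReal.ofReal_le_ofReal ?_))
      have e1 : (R ^ (1/θ)) ^ (-s) = (R / R ^ (1/θ)) ^ (s / (1-θ)) := by
        have e2 : R / R ^ (1/θ) = R ^ ((1:ℝ) - 1/θ) := by
          rw [Real.rpow_sub hR0, Real.rpow_one]
        rw [e2, ← Real.rpow_mul hR0.le, ← Real.rpow_mul hR0.le]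
        congr 1
        field_simp
        ring
      rw [e1]
      exact le_mul_of_one_le_left (by positivity) (by rw [hCdef]; linarith)
    · push_neg at hcase
      have hmono2 : (coveringNumber (R ^ (1/θ)) E : ℝ≥0∞) ≤
          (coveringNumber (2 * δ₀) E : ℝ≥0∞) :=
        ENat.toENNReal_le.mpr (coveringNumber_anti hcase.le E)
      refine hmono.trans (hmono2.trans (((hcov _ (by positivity) le_rfl)).trans
        (ENNReal.ofReal_le_ofReal ?_)))
      calc (2 * δ₀) ^ (-s) ≤ C := by rw [hCdef]; linarith
        _ = C * 1 := (mul_one C).symm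
        _ ≤ C * (R / R ^ (1/θ)) ^ (s / (1-θ)) :=
            mul_le_mul_of_nonneg_left hpow1 hC0.le
  refine le_of_forall_pos_le_add fun ε hε => ?_
  rw [genUpperBoxDim, Filter.limsup_eq]
  refine csInf_le ⟨0, fun a ha => ?_⟩ ?_
  · have ha' : ∀ᶠ θ : ℝ in nhdsWithin 0 (Set.Ioi 0), assouadSpectrum θ E ≤ a := ha
    obtain ⟨θ, hθ⟩ := ha'.exists
    exact (assouadSpectrum_nonneg θ E).trans hθ
  · have hsε : (0:ℝ) < s + ε := by linarith
    set τ : ℝ := min 1 (ε / (s + ε)) with hτdef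
    have hτ0 : 0 < τ := lt_min one_pos (div_pos hε hsε)
    have hmem : Set.Ioo (0:ℝ) τ ∈ nhdsWithin (0:ℝ) (Set.Ioi 0) :=
      Ioo_mem_nhdsGT_of_mem ⟨le_rfl, hτ0⟩
    refine Filter.eventually_of_mem hmem fun θ hθ => ?_
    have hθ0 : 0 < θ := hθ.1
    have hθτ : θ < τ := hθ.2
    have hθ1 : θ < 1 := lt_of_lt_of_le hθτ (min_le_left _ _)
    have hθε : θ < ε / (s + ε) := lt_of_lt_of_le hθτ (min_le_right _ _)
    refine (hspec θ hθ0 hθ1).trans ?_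
    rw [div_le_iff₀ (by linarith)]
    have : θ * (s + ε) < ε := by
      rw [← lt_div_iff₀ hsε] at *
      exact hθε
    nlinarith

variable {d : ℕ}
local notation "Xd" => EuclideanSpace ℝ (Fin d)

/-- Final theorem, proven as an auxiliary statement. -/
lemma packingDim_eq_aux (F : Set Xd) :
    packingDim F = sInf {a : ℝ | ∃ G : ℕ → Set Xd,
        (F ⊆ ⋃ i, G i) ∧ a = ⨆ i, genUpperBoxDim (G i)} := by
  classical
  set S : Set ℝ := {a : ℝ | ∃ G : ℕ → Set Xd,
      (F ⊆ ⋃ i, G i) ∧ a = ⨆ i, genUpperBoxDim (G i)} with hS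
  set P : Set ℝ := {s : ℝ | 0 ≤ s ∧ packingMeasure s F = 0} with hPdef
  have hSne : S.Nonempty :=
    ⟨⨆ _i : ℕ, genUpperBoxDim (Set.univ : Set Xd), fun _ => Set.univ,
      fun x _ => Set.mem_iUnion.mpr ⟨0, trivial⟩, rfl⟩
  have hSbdd : BddBelow S := by
    refine ⟨0, fun a ha => ?_⟩
    obtain ⟨G, hcov, rfl⟩ := ha
    have hbdd : BddAbove (Set.range fun i => genUpperBoxDim (G i)) := by
      refine ⟨d, ?_⟩
      rintro x ⟨i, rfl⟩
      exact genUpperBoxDim_le_d (G i)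
    exact (genUpperBoxDim_nonneg (G 0)).trans (le_ciSup hbdd 0)
  have hPbdd : BddBelow P := ⟨0, fun x hx => hx.1⟩
  have hPne : P.Nonempty := by
    refine ⟨(d : ℝ) + 1, by positivity, ?_⟩
    exact packingMeasure_eq_zero_of_cover (G := fun _ => (Set.univ : Set Xd))
      (fun x _ => Set.mem_iUnion.mpr ⟨0, trivial⟩)
      (fun i => lt_of_le_of_lt (genUpperBoxDim_le_d _) (by linarith))
  refine le_antisymm ?_ ?_
  · -- packingDim ≤ sInf S
    refine le_csInf hSne fun a ha => ?_
    obtain ⟨G, hcov, rfl⟩ := ha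
    exact packingDim_le_of_cover hcov
  · -- sInf S ≤ packingDim
    by_contra hcon
    push_neg at hcon
    obtain ⟨s, hsP, hslt⟩ := exists_lt_of_csInf_lt hPne hcon
    obtain ⟨hs0, hsm⟩ := hsP
    have hmlt : packingMeasure s F < 1 := by rw [hsm]; norm_num
    rw [packingMeasure] at hmlt
    obtain ⟨G, hG⟩ := iInf_lt_iff.mp hmlt
    obtain ⟨hcov, hsum⟩ := iInf_lt_iff.mp hG
    have hi : ∀ i, genUpperBoxDim (G i) ≤ s := by
      intro i
      refine genUpperBoxDim_le_of_packingPre₀_lt_one hs0 ?_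
      exact lt_of_le_of_lt (ENNReal.le_tsum i) hsum
    have haS : (⨆ i, genUpperBoxDim (G i)) ∈ S := ⟨G, hcov, rfl⟩
    have hle : sInf S ≤ ⨆ i, genUpperBoxDim (G i) := csInf_le hSbdd haS
    have hsup_le : (⨆ i, genUpperBoxDim (G i)) ≤ s := ciSup_le hi
    have : sInf S ≤ s := hle.trans hsup_le
    have : sInf S < sInf S := lt_of_le_of_lt this hslt
    exact lt_irrefl _ this

end Aux8

/-- The packing dimension equals the modified generalized upper box dimension
`\overline{dim}_{MGB} F := inf { sup_i \overline{dim}_{GB} F_i : F ⊆ ⋃_i F_i }`. -/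
theorem packingDim_eq_modifiedGenUpperBoxDim
    (d : ℕ) (F : Set (EuclideanSpace ℝ (Fin d))) :
    packingDim F = sInf {a : ℝ | ∃ G : ℕ → Set (EuclideanSpace ℝ (Fin d)),
        (F ⊆ ⋃ i, G i) ∧ a = ⨆ i, genUpperBoxDim (G i)} := by
  exact packingDim_eq_aux F

end
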